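/- Let V₀ be a d×d real symmetric positive definite matrix, let u₀, u₁, …, u_{T−1} ∈ ℝᵈ satisfy ‖u_t‖₂ ≤ 1, and define V_{t+1} = V_t + u_t u_tᵀ. Then for every p ∈ (0, 1], ∑_{t=0}^{T−1} ‖u_t‖_{V_t⁻¹}^{2p} ≤ 2^p T^{1−p} (log(det V_T / det V₀))^p + (3/(2p)) (tr(V₀^{−p}) − tr(V_T^{−p})). -/

import Mathlib

open Matrix

/-- The Mahalanobis norm `‖x‖_B = √(xᵀ B x)`. -/
noncomputable def mnorm {d : ℕ} (B : Matrix (Fin d) (Fin d) ℝ) (x : Fin d → ℝ) : ℝ :=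
  Real.sqrt (x ⬝ᵥ B *ᵥ x)

/-- Real matrix power of a symmetric matrix, via the spectral decomposition
(junk value `0` on non-Hermitian matrices). -/
noncomputable def mpow {d : ℕ} (A : Matrix (Fin d) (Fin d) ℝ) (q : ℝ) :
    Matrix (Fin d) (Fin d) ℝ :=
  if hA : A.IsHermitian then
    (hA.eigenvectorUnitary : Matrix (Fin d) (Fin d) ℝ) *
      Matrix.diagonal (fun i => hA.eigenvalues i ^ q) *
      star (hA.eigenvectorUnitary : Matrix (Fin d) (Fin d) ℝ)
  else 0

namespace EPL

variable {d : ℕ} {A B M N : Matrix (Fin d) (Fin d) ℝ}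

lemma continuousOn_of_finite {S : Set ℝ} (hS : S.Finite) (f : ℝ → ℝ) : ContinuousOn f S := by
  rw [continuousOn_iff_continuous_restrict]
  have : Finite S := hS.to_subtype
  exact continuous_of_discreteTopology

lemma contOn (f : ℝ → ℝ) (A : Matrix (Fin d) (Fin d) ℝ) : ContinuousOn f (spectrum ℝ A) :=
  continuousOn_of_finite (Matrix.finite_real_spectrum (A := A)) f

lemma contOn_image (g f : ℝ → ℝ) (A : Matrix (Fin d) (Fin d) ℝ) :
    ContinuousOn g (f '' spectrum ℝ A) :=
  continuousOn_of_finite ((Matrix.finite_real_spectrum (A := A)).image f) g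

lemma isSA (hA : A.IsHermitian) : IsSelfAdjoint A := hA

lemma mpow_eq_cfc (hA : A.IsHermitian) (q : ℝ) :
    mpow A q = cfc (fun x : ℝ => x ^ q) A := by
  rw [hA.cfc_eq, mpow, dif_pos hA, Matrix.IsHermitian.cfc]
  congr

lemma spec_pos (hA : A.PosDef) : ∀ x ∈ spectrum ℝ A, (0:ℝ) < x := by
  intro x hx
  rw [hA.1.spectrum_real_eq_range_eigenvalues] at hx
  obtain ⟨i, rfl⟩ := hx
  exact hA.eigenvalues_pos i

lemma mpow_mul_mpow (hA : A.PosDef) (a b : ℝ) : mpow A a * mpow A b = mpow A (a + b) := by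
  rw [mpow_eq_cfc hA.1, mpow_eq_cfc hA.1, mpow_eq_cfc hA.1,
    ← cfc_mul _ _ A (contOn _ A) (contOn _ A)]
  exact cfc_congr fun x hx => (Real.rpow_add (spec_pos hA x hx) a b).symm

lemma mpow_one (hA : A.IsHermitian) : mpow A 1 = A := by
  rw [mpow_eq_cfc hA]
  have h : (fun x : ℝ => x ^ (1:ℝ)) = fun x : ℝ => x := funext fun x => Real.rpow_one x
  rw [h, cfc_id' ℝ A (isSA hA)]

lemma mpow_zero (hA : A.IsHermitian) : mpow A 0 = 1 := by
  rw [mpow_eq_cfc hA]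
  have h : (fun x : ℝ => x ^ (0:ℝ)) = fun _ : ℝ => (1:ℝ) := funext fun x => Real.rpow_zero x
  rw [h, cfc_const_one ℝ A (isSA hA)]

lemma mpow_neg_one (hA : A.PosDef) : mpow A (-1) = A⁻¹ := by
  symm
  apply Matrix.inv_eq_right_inv
  calc A * mpow A (-1) = mpow A 1 * mpow A (-1) := by rw [mpow_one hA.1]
  _ = mpow A 0 := by rw [mpow_mul_mpow hA]; norm_num
  _ = 1 := mpow_zero hA.1

lemma mpow_inv (hA : A.PosDef) (q : ℝ) : mpow A⁻¹ q = mpow A (-q) := by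
  have h1 : A⁻¹ = cfc (fun x : ℝ => x ^ (-1:ℝ)) A := by
    rw [← mpow_eq_cfc hA.1, mpow_neg_one hA]
  rw [mpow_eq_cfc hA.inv.1 q, h1,
    ← cfc_comp (fun x : ℝ => x ^ q) (fun x : ℝ => x ^ (-1:ℝ)) A (isSA hA.1)
      (contOn_image _ _ A) (contOn _ A),
    mpow_eq_cfc hA.1]
  apply cfc_congr
  intro x hx
  have hx0 := spec_pos hA x hx
  simp only [Function.comp_apply]
  rw [show x ^ (-1:ℝ) = x⁻¹ by rw [Real.rpow_neg hx0.le, Real.rpow_one],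
    Real.inv_rpow hx0.le, ← Real.rpow_neg hx0.le]

lemma trace_mpow (hA : A.IsHermitian) (q : ℝ) :
    (mpow A q).trace = ∑ i, hA.eigenvalues i ^ q := by
  rw [mpow, dif_pos hA, Matrix.trace_mul_cycle,
    Unitary.star_mul_self_of_mem (SetLike.coe_mem _), one_mul, Matrix.trace_diagonal]

lemma vecMul_unitary (hA : A.IsHermitian) (u : Fin d → ℝ) :
    u ᵥ* (hA.eigenvectorUnitary : Matrix (Fin d) (Fin d) ℝ) =
      star (hA.eigenvectorUnitary : Matrix (Fin d) (Fin d) ℝ) *ᵥ u := by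
  rw [Matrix.star_eq_conjTranspose, Matrix.conjTranspose_eq_transpose_of_trivial,
    Matrix.mulVec_transpose]

lemma quadform_mpow (hA : A.IsHermitian) (q : ℝ) (u : Fin d → ℝ) :
    u ⬝ᵥ mpow A q *ᵥ u =
      ∑ i, hA.eigenvalues i ^ q *
        ((star (hA.eigenvectorUnitary : Matrix (Fin d) (Fin d) ℝ) *ᵥ u) i) ^ 2 := by
  rw [mpow, dif_pos hA, ← Matrix.mulVec_mulVec, ← Matrix.mulVec_mulVec,
    Matrix.dotProduct_mulVec, vecMul_unitary hA]
  simp only [dotProduct, Matrix.mulVec_diagonal]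
  exact Finset.sum_congr rfl fun i _ => by ring

lemma sum_sq_eq (hA : A.IsHermitian) (u : Fin d → ℝ) :
    ∑ i, ((star (hA.eigenvectorUnitary : Matrix (Fin d) (Fin d) ℝ) *ᵥ u) i) ^ 2 = u ⬝ᵥ u := by
  have h1 : ∑ i, ((star (hA.eigenvectorUnitary : Matrix (Fin d) (Fin d) ℝ) *ᵥ u) i) ^ 2
      = (u ᵥ* (hA.eigenvectorUnitary : Matrix (Fin d) (Fin d) ℝ)) ⬝ᵥ
        (star (hA.eigenvectorUnitary : Matrix (Fin d) (Fin d) ℝ) *ᵥ u) := by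
    rw [vecMul_unitary hA]
    simp only [dotProduct, sq]
  rw [h1, ← Matrix.dotProduct_mulVec, Matrix.mulVec_mulVec,
    Unitary.mul_star_self_of_mem (SetLike.coe_mem _), Matrix.one_mulVec]

lemma trace_mpow_mul (hA : A.IsHermitian) (hB : B.IsHermitian) (q : ℝ) :
    (mpow A q * B).trace =
      ∑ i, ∑ j, hA.eigenvalues i ^ q * hB.eigenvalues j *
        ((star (hA.eigenvectorUnitary : Matrix (Fin d) (Fin d) ℝ) *
          (hB.eigenvectorUnitary : Matrix (Fin d) (Fin d) ℝ)) i j) ^ 2 := by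
  set U : Matrix (Fin d) (Fin d) ℝ := (hA.eigenvectorUnitary : Matrix (Fin d) (Fin d) ℝ) with hU
  set W : Matrix (Fin d) (Fin d) ℝ := (hB.eigenvectorUnitary : Matrix (Fin d) (Fin d) ℝ) with hW
  set P : Matrix (Fin d) (Fin d) ℝ := star U * W with hP
  have hBd : B = W * Matrix.diagonal hB.eigenvalues * star W := by
    conv_lhs => rw [hB.spectral_theorem]
    congr
  rw [mpow, dif_pos hA]
  conv_lhs => rw [hBd]
  have h1 : (U * Matrix.diagonal (fun i => hA.eigenvalues i ^ q) * star U) *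
      (W * Matrix.diagonal hB.eigenvalues * star W)
      = (U * Matrix.diagonal (fun i => hA.eigenvalues i ^ q)) *
        (P * Matrix.diagonal hB.eigenvalues * star W) := by
    rw [hP]; simp only [Matrix.mul_assoc]
  rw [h1, Matrix.trace_mul_comm]
  have h2 : (P * Matrix.diagonal hB.eigenvalues * star W) *
      (U * Matrix.diagonal (fun i => hA.eigenvalues i ^ q))
      = (P * Matrix.diagonal hB.eigenvalues * star P) *
        Matrix.diagonal (fun i => hA.eigenvalues i ^ q) := by
    rw [hP, Matrix.star_mul, star_star]; simp only [Matrix.mul_assoc]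
  rw [h2, Matrix.trace_mul_comm]
  have h3 : ∀ i, (P * Matrix.diagonal hB.eigenvalues * star P) i i
      = ∑ j, hB.eigenvalues j * (P i j) ^ 2 := by
    intro i
    rw [Matrix.mul_apply]
    simp only [Matrix.mul_diagonal, Matrix.star_apply, star_trivial]
    exact Finset.sum_congr rfl fun j _ => by ring
  have h4 : (Matrix.diagonal (fun i => hA.eigenvalues i ^ q) *
      (P * Matrix.diagonal hB.eigenvalues * star P)).trace
      = ∑ i, hA.eigenvalues i ^ q * ∑ j, hB.eigenvalues j * (P i j) ^ 2 := by
    rw [Matrix.trace]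
    exact Finset.sum_congr rfl fun i _ => by
      rw [Matrix.diag_apply, Matrix.diagonal_mul, h3 i]
  rw [h4]
  exact Finset.sum_congr rfl fun i _ => by
    rw [Finset.mul_sum]
    exact Finset.sum_congr rfl fun j _ => by ring

lemma rowsum (hA : A.IsHermitian) (hB : B.IsHermitian) (i : Fin d) :
    ∑ j, ((star (hA.eigenvectorUnitary : Matrix (Fin d) (Fin d) ℝ) *
      (hB.eigenvectorUnitary : Matrix (Fin d) (Fin d) ℝ)) i j) ^ 2 = 1 := by
  set U : Matrix (Fin d) (Fin d) ℝ := (hA.eigenvectorUnitary : Matrix (Fin d) (Fin d) ℝ) with hU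
  set W : Matrix (Fin d) (Fin d) ℝ := (hB.eigenvectorUnitary : Matrix (Fin d) (Fin d) ℝ) with hW
  have h : (star U * W) * star (star U * W) = 1 := by
    rw [Matrix.star_mul, star_star]
    calc star U * W * (star W * U) = star U * ((W * star W) * U) := by
          simp only [Matrix.mul_assoc]
    _ = 1 := by
        rw [Unitary.mul_star_self_of_mem (SetLike.coe_mem _), one_mul,
          Unitary.star_mul_self_of_mem (SetLike.coe_mem _)]
  have h2 : ((star U * W) * star (star U * W)) i i = (1 : Matrix (Fin d) (Fin d) ℝ) i i := by
    rw [h]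
  rw [Matrix.one_apply_eq] at h2
  rw [← h2, Matrix.mul_apply]
  refine Finset.sum_congr rfl fun j _ => ?_
  simp only [Matrix.star_apply, star_trivial, sq]

lemma colsum (hA : A.IsHermitian) (hB : B.IsHermitian) (j : Fin d) :
    ∑ i, ((star (hA.eigenvectorUnitary : Matrix (Fin d) (Fin d) ℝ) *
      (hB.eigenvectorUnitary : Matrix (Fin d) (Fin d) ℝ)) i j) ^ 2 = 1 := by
  set U : Matrix (Fin d) (Fin d) ℝ := (hA.eigenvectorUnitary : Matrix (Fin d) (Fin d) ℝ) with hU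
  set W : Matrix (Fin d) (Fin d) ℝ := (hB.eigenvectorUnitary : Matrix (Fin d) (Fin d) ℝ) with hW
  have h : star (star U * W) * (star U * W) = 1 := by
    rw [Matrix.star_mul, star_star]
    calc star W * U * (star U * W) = star W * ((U * star U) * W) := by
          simp only [Matrix.mul_assoc]
    _ = 1 := by
        rw [Unitary.mul_star_self_of_mem (SetLike.coe_mem _), one_mul,
          Unitary.star_mul_self_of_mem (SetLike.coe_mem _)]
  have h2 : (star (star U * W) * (star U * W)) j j = (1 : Matrix (Fin d) (Fin d) ℝ) j j := by
    rw [h]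
  rw [Matrix.one_apply_eq] at h2
  rw [← h2, Matrix.mul_apply]
  refine Finset.sum_congr rfl fun i _ => ?_
  simp only [Matrix.star_apply, star_trivial, sq]

lemma scalar_klein {a b p : ℝ} (ha : 0 < a) (hb : 0 < b) (hp0 : 0 < p) (hp1 : p ≤ 1) :
    b ^ p ≤ a ^ p + p * (a ^ (p-1) * b - a ^ (p-1) * a) := by
  have hs : -1 ≤ b/a - 1 := by
    have := div_pos hb ha; linarith
  have hber := rpow_one_add_le_one_add_mul_self hs hp0.le hp1
  rw [show (1:ℝ) + (b/a - 1) = b/a by ring] at hber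
  have hd : (b/a) ^ p = b ^ p / a ^ p := Real.div_rpow hb.le ha.le p
  have hap : 0 < a ^ p := Real.rpow_pos_of_pos ha p
  have h1 : a ^ (p-1) * a = a ^ p := by
    rw [Real.rpow_sub_one ha.ne' p, div_mul_cancel₀ _ ha.ne']
  have h2 : a ^ (p-1) * b = a ^ p * (b/a) := by
    rw [Real.rpow_sub_one ha.ne' p]; ring
  rw [h1, h2]
  calc b ^ p = a ^ p * (b ^ p / a ^ p) := by field_simp
  _ ≤ a ^ p * (1 + p * (b/a - 1)) := by
      apply mul_le_mul_of_nonneg_left _ hap.le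
      rw [← hd]; exact hber
  _ = a ^ p + p * (a ^ p * (b/a) - a ^ p) := by ring

set_option maxHeartbeats 800000 in
lemma klein (hM : M.PosDef) (hN : N.PosDef) {p : ℝ} (hp0 : 0 < p) (hp1 : p ≤ 1) :
    (mpow N p).trace ≤ (mpow M p).trace + p * ((mpow M (p-1)) * (N - M)).trace := by
  have hMh := hM.1
  have hNh := hN.1
  have hsub : (mpow M (p-1) * (N - M)).trace
      = (mpow M (p-1) * N).trace - (mpow M (p-1) * M).trace := by
    rw [Matrix.mul_sub, Matrix.trace_sub]
  have hMM : mpow M (p-1) * M = mpow M p := by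
    have h1 : mpow M (p-1) * mpow M 1 = mpow M p := by
      rw [mpow_mul_mpow hM]; congr 1; ring
    rwa [mpow_one hMh] at h1
  rw [trace_mpow hNh, trace_mpow hMh, hsub, trace_mpow_mul hMh hNh (p-1), hMM, trace_mpow hMh]
  set P : Matrix (Fin d) (Fin d) ℝ :=
    star (hMh.eigenvectorUnitary : Matrix (Fin d) (Fin d) ℝ) *
      (hNh.eigenvectorUnitary : Matrix (Fin d) (Fin d) ℝ) with hP
  have e1 : ∑ j, hNh.eigenvalues j ^ p = ∑ i, ∑ j, (P i j)^2 * hNh.eigenvalues j ^ p := by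
    rw [Finset.sum_comm]
    refine Finset.sum_congr rfl fun j _ => ?_
    rw [← Finset.sum_mul, colsum hMh hNh j, one_mul]
  have e2 : ∑ i, hMh.eigenvalues i ^ p = ∑ i, ∑ j, (P i j)^2 * hMh.eigenvalues i ^ p := by
    refine Finset.sum_congr rfl fun i _ => ?_
    rw [← Finset.sum_mul, rowsum hMh hNh i, one_mul]
  rw [e1, e2]
  have key : ∀ i j, (P i j)^2 * hNh.eigenvalues j ^ p
      ≤ (P i j)^2 * hMh.eigenvalues i ^ p
        + p * (hMh.eigenvalues i ^ (p-1) * hNh.eigenvalues j * (P i j)^2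
          - (P i j)^2 * hMh.eigenvalues i ^ p) := by
    intro i j
    have h := scalar_klein (hM.eigenvalues_pos i) (hN.eigenvalues_pos j) hp0 hp1
    have h1 : hMh.eigenvalues i ^ (p-1) * hMh.eigenvalues i = hMh.eigenvalues i ^ p := by
      rw [Real.rpow_sub_one (hM.eigenvalues_pos i).ne' p,
        div_mul_cancel₀ _ (hM.eigenvalues_pos i).ne']
    rw [h1] at h
    nlinarith [mul_le_mul_of_nonneg_left h (sq_nonneg (P i j))]
  calc ∑ i, ∑ j, (P i j)^2 * hNh.eigenvalues j ^ p
      ≤ ∑ i, ∑ j, ((P i j)^2 * hMh.eigenvalues i ^ p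
        + p * (hMh.eigenvalues i ^ (p-1) * hNh.eigenvalues j * (P i j)^2
          - (P i j)^2 * hMh.eigenvalues i ^ p)) :=
      Finset.sum_le_sum fun i _ => Finset.sum_le_sum fun j _ => key i j
  _ = (∑ i, ∑ j, (P i j)^2 * hMh.eigenvalues i ^ p)
      + p * ((∑ i, ∑ j, hMh.eigenvalues i ^ (p-1) * hNh.eigenvalues j * (P i j)^2)
        - ∑ i, ∑ j, (P i j)^2 * hMh.eigenvalues i ^ p) := by
      simp only [mul_sub, Finset.sum_add_distrib, Finset.sum_sub_distrib, Finset.mul_sum]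

lemma jensen_scalar {n : ℕ} (lam c : Fin n → ℝ) (hlam : ∀ i, 0 < lam i) (hc : ∀ i, 0 ≤ c i)
    (hm : ∑ i, c i ≤ 1) {r : ℝ} (hr : 1 ≤ r) :
    (∑ i, lam i * c i) ^ r ≤ ∑ i, lam i ^ r * c i := by
  have hm0 : 0 ≤ ∑ i, c i := Finset.sum_nonneg fun i _ => hc i
  have hSr0 : 0 ≤ ∑ i, lam i ^ r * c i :=
    Finset.sum_nonneg fun i _ => mul_nonneg (Real.rpow_nonneg (hlam i).le r) (hc i)
  rcases eq_or_lt_of_le hm0 with h0 | hpos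
  · have hz : ∀ i ∈ Finset.univ, c i = 0 :=
      (Finset.sum_eq_zero_iff_of_nonneg (fun i _ => hc i)).1 h0.symm
    have hS : ∑ i, lam i * c i = 0 :=
      Finset.sum_eq_zero fun i hi => by rw [hz i hi, mul_zero]
    rw [hS, Real.zero_rpow (by linarith : r ≠ 0)]
    exact hSr0
  · set m : ℝ := ∑ i, c i with hmdef
    have hq := Real.rpow_arith_mean_le_arith_mean_rpow Finset.univ (fun i => c i / m)
      (fun i => lam i) (fun i _ => div_nonneg (hc i) hm0)
      (by rw [← Finset.sum_div]; field_simp; rfl) (fun i _ => (hlam i).le) hr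
    have e1 : ∑ i, (c i / m) * lam i = (∑ i, lam i * c i) / m := by
      rw [Finset.sum_div]; exact Finset.sum_congr rfl fun i _ => by ring
    have e2 : ∑ i, (c i / m) * lam i ^ r = (∑ i, lam i ^ r * c i) / m := by
      rw [Finset.sum_div]; exact Finset.sum_congr rfl fun i _ => by ring
    rw [e1, e2] at hq
    have hS0 : 0 ≤ ∑ i, lam i * c i :=
      Finset.sum_nonneg fun i _ => mul_nonneg (hlam i).le (hc i)
    rw [Real.div_rpow hS0 hm0] at hq
    have hmr : 0 < m ^ r := Real.rpow_pos_of_pos hpos r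
    have h5 : (∑ i, lam i * c i) ^ r ≤ m ^ r / m * (∑ i, lam i ^ r * c i) := by
      rw [div_le_div_iff₀ hmr hpos] at hq
      rw [div_mul_eq_mul_div, le_div_iff₀ hpos]
      linarith [hq]
    have h6 : m ^ r / m ≤ 1 := by
      rw [← Real.rpow_sub_one hpos.ne' r]
      exact Real.rpow_le_one hm0 hm (by linarith)
    calc (∑ i, lam i * c i) ^ r ≤ m ^ r / m * (∑ i, lam i ^ r * c i) := h5
    _ ≤ 1 * (∑ i, lam i ^ r * c i) := mul_le_mul_of_nonneg_right h6 hSr0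
    _ = _ := one_mul _

lemma jensen (hA : A.PosDef) {u : Fin d → ℝ} (hu : u ⬝ᵥ u ≤ 1) {r : ℝ} (hr : 1 ≤ r) :
    (u ⬝ᵥ A *ᵥ u) ^ r ≤ u ⬝ᵥ mpow A r *ᵥ u := by
  have hAh := hA.1
  have hq1 : u ⬝ᵥ A *ᵥ u = ∑ i, hAh.eigenvalues i *
      ((star (hAh.eigenvectorUnitary : Matrix (Fin d) (Fin d) ℝ) *ᵥ u) i) ^ 2 := by
    conv_lhs => rw [← mpow_one hAh]
    rw [quadform_mpow hAh 1 u]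
    exact Finset.sum_congr rfl fun i _ => by rw [Real.rpow_one]
  rw [hq1, quadform_mpow hAh r u]
  apply jensen_scalar _ _ (fun i => hA.eigenvalues_pos i) (fun i => sq_nonneg _) _ hr
  rw [sum_sq_eq hAh u]; exact hu

lemma mul_vecMulVec (Mm : Matrix (Fin d) (Fin d) ℝ) (a b : Fin d → ℝ) :
    Mm * vecMulVec a b = vecMulVec (Mm *ᵥ a) b := by
  ext i j
  simp only [Matrix.mul_apply, vecMulVec_apply, Matrix.mulVec, dotProduct]
  rw [Finset.sum_mul]
  exact Finset.sum_congr rfl fun k _ => by ring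

lemma vecMulVec_mul (a b : Fin d → ℝ) (Mm : Matrix (Fin d) (Fin d) ℝ) :
    vecMulVec a b * Mm = vecMulVec a (b ᵥ* Mm) := by
  ext i j
  simp only [Matrix.mul_apply, vecMulVec_apply, Matrix.vecMul, dotProduct]
  rw [Finset.mul_sum]
  exact Finset.sum_congr rfl fun k _ => by ring

lemma vecMulVec_mul_vecMulVec (a b c e : Fin d → ℝ) :
    vecMulVec a b * vecMulVec c e = (b ⬝ᵥ c) • vecMulVec a e := by
  ext i j
  simp only [Matrix.mul_apply, vecMulVec_apply, Matrix.smul_apply, smul_eq_mul, dotProduct]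
  rw [Finset.sum_mul]
  exact Finset.sum_congr rfl fun k _ => by ring

lemma trace_mul_vecMulVec (Mm : Matrix (Fin d) (Fin d) ℝ) (a : Fin d → ℝ) :
    (Mm * vecMulVec a a).trace = a ⬝ᵥ Mm *ᵥ a := by
  rw [mul_vecMulVec, Matrix.trace]
  simp only [Matrix.diag_apply, vecMulVec_apply]
  rw [dotProduct_comm]
  rfl

lemma posSemidef_vecMulVec (u : Fin d → ℝ) : (vecMulVec u u).PosSemidef := by
  refine posSemidef_iff_dotProduct_mulVec.mpr ⟨?_, ?_⟩
  · ext i j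
    simp only [Matrix.conjTranspose_apply, vecMulVec_apply, star_trivial]
    ring
  · intro y
    have h : star y ⬝ᵥ (vecMulVec u u *ᵥ y) = (u ⬝ᵥ y) * (u ⬝ᵥ y) := by
      simp only [dotProduct, Matrix.mulVec, vecMulVec_apply, Pi.star_apply, star_trivial]
      rw [Finset.sum_mul]
      refine Finset.sum_congr rfl fun i _ => ?_
      rw [Finset.mul_sum, Finset.mul_sum]
      refine Finset.sum_congr rfl fun j _ => by ring
    rw [h]
    exact mul_self_nonneg _

lemma quad_nonneg (h : M.PosSemidef) (x : Fin d → ℝ) : 0 ≤ x ⬝ᵥ M *ᵥ x := by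
  have h2 := h.dotProduct_mulVec_nonneg x
  rwa [show star x = x from funext fun i => star_trivial _] at h2

lemma sherman_morrison (hV : M.PosDef) (u : Fin d → ℝ) :
    (M + vecMulVec u u)⁻¹
      = M⁻¹ - (1 + u ⬝ᵥ M⁻¹ *ᵥ u)⁻¹ • vecMulVec (M⁻¹ *ᵥ u) (M⁻¹ *ᵥ u) := by
  have hx0 : 0 ≤ u ⬝ᵥ M⁻¹ *ᵥ u := quad_nonneg hV.inv.posSemidef u
  have h1x : (0:ℝ) < 1 + u ⬝ᵥ M⁻¹ *ᵥ u := by linarith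
  apply Matrix.inv_eq_right_inv
  have hMM : M * M⁻¹ = 1 := Matrix.mul_nonsing_inv M hV.det_pos.ne'.isUnit
  have hMw : M *ᵥ (M⁻¹ *ᵥ u) = u := by
    rw [Matrix.mulVec_mulVec, hMM, Matrix.one_mulVec]
  have hMinvT : M⁻¹ᵀ = M⁻¹ := by
    rw [← Matrix.conjTranspose_eq_transpose_of_trivial]; exact hV.inv.1
  have hvm : u ᵥ* M⁻¹ = M⁻¹ *ᵥ u := by
    rw [← Matrix.mulVec_transpose, hMinvT]
  have hdot : u ⬝ᵥ (M⁻¹ *ᵥ u) = u ⬝ᵥ M⁻¹ *ᵥ u := rfl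
  set c : ℝ := (1 + u ⬝ᵥ M⁻¹ *ᵥ u)⁻¹ with hc
  set w : Fin d → ℝ := M⁻¹ *ᵥ u with hw
  have hcoef : (1:ℝ) - c - c * (u ⬝ᵥ w) = 0 := by
    rw [hw, hdot, hc]
    field_simp
    ring
  calc (M + vecMulVec u u) * (M⁻¹ - c • vecMulVec w w)
      = M * M⁻¹ - c • (M * vecMulVec w w) + (vecMulVec u u * M⁻¹
        - c • (vecMulVec u u * vecMulVec w w)) := by
        rw [Matrix.add_mul, Matrix.mul_sub, Matrix.mul_sub, Matrix.mul_smul, Matrix.mul_smul]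
  _ = 1 - c • vecMulVec u w + (vecMulVec u w - (c * (u ⬝ᵥ w)) • vecMulVec u w) := by
        rw [hMM, mul_vecMulVec, hMw, vecMulVec_mul, hvm, vecMulVec_mul_vecMulVec,
          smul_smul]
  _ = 1 + ((1:ℝ) - c - c * (u ⬝ᵥ w)) • vecMulVec u w := by module
  _ = 1 := by rw [hcoef, zero_smul, add_zero]

lemma det_step (hV : M.PosDef) (u : Fin d → ℝ) :
    (M + vecMulVec u u).det = M.det * (1 + u ⬝ᵥ M⁻¹ *ᵥ u) := by
  rw [vecMulVec_eq (Fin 1), Matrix.det_add_mul _ _ hV.det_pos.ne'.isUnit]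
  congr 1
  rw [Matrix.det_unique]
  have h1 : Matrix.replicateRow (Fin 1) u * M⁻¹ = Matrix.replicateRow (Fin 1) (u ᵥ* M⁻¹) :=
    (Matrix.replicateRow_vecMul M⁻¹ u).symm
  rw [h1]
  rw [Matrix.add_apply, Matrix.one_apply_eq, Matrix.replicateRow_mul_replicateCol_apply]
  rw [← Matrix.dotProduct_mulVec]

set_option maxHeartbeats 1000000 in
lemma trace_drop (hV : M.PosDef) {u : Fin d → ℝ} (hu : u ⬝ᵥ u ≤ 1)
    {p : ℝ} (hp0 : 0 < p) (hp1 : p ≤ 1) :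
    p * (u ⬝ᵥ M⁻¹ *ᵥ u) ^ (p+1) / (1 + u ⬝ᵥ M⁻¹ *ᵥ u)
      ≤ (mpow M (-p)).trace - (mpow (M + vecMulVec u u) (-p)).trace := by
  have hx0 : 0 ≤ u ⬝ᵥ M⁻¹ *ᵥ u := quad_nonneg hV.inv.posSemidef u
  have h1x : (0:ℝ) < 1 + u ⬝ᵥ M⁻¹ *ᵥ u := by linarith
  have hV' : (M + vecMulVec u u).PosDef := hV.add_posSemidef (posSemidef_vecMulVec u)
  have hMi : M⁻¹.PosDef := hV.inv
  have hNi : (M + vecMulVec u u)⁻¹.PosDef := hV'.inv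
  have hk := klein hMi hNi hp0 hp1
  rw [mpow_inv hV p, mpow_inv hV' p] at hk
  have hMinvT : M⁻¹ᵀ = M⁻¹ := by
    rw [← Matrix.conjTranspose_eq_transpose_of_trivial]; exact hV.inv.1
  have hNM : (M + vecMulVec u u)⁻¹ - M⁻¹
      = -((1 + u ⬝ᵥ M⁻¹ *ᵥ u)⁻¹ • vecMulVec (M⁻¹ *ᵥ u) (M⁻¹ *ᵥ u)) := by
    rw [sherman_morrison hV u, sub_sub_cancel_left]
  have hcomp : M⁻¹ * (mpow M⁻¹ (p-1) * M⁻¹) = mpow M⁻¹ (p+1) := by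
    have h1 : mpow M⁻¹ 1 * (mpow M⁻¹ (p-1) * mpow M⁻¹ 1) = mpow M⁻¹ (p+1) := by
      rw [mpow_mul_mpow hMi, mpow_mul_mpow hMi]; congr 1; ring
    rwa [mpow_one hMi.1] at h1
  have hquad : (M⁻¹ *ᵥ u) ⬝ᵥ (mpow M⁻¹ (p-1)) *ᵥ (M⁻¹ *ᵥ u)
      = u ⬝ᵥ (mpow M⁻¹ (p+1)) *ᵥ u := by
    have hsym : M⁻¹ *ᵥ u = u ᵥ* M⁻¹ := by rw [← Matrix.mulVec_transpose, hMinvT]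
    conv_lhs => rw [Matrix.mulVec_mulVec, hsym, ← Matrix.dotProduct_mulVec,
      Matrix.mulVec_mulVec, ← Matrix.mul_assoc]
    rw [← hcomp, Matrix.mul_assoc]
  have htr2 : ((mpow M⁻¹ (p-1)) * ((M + vecMulVec u u)⁻¹ - M⁻¹)).trace
      = -((1 + u ⬝ᵥ M⁻¹ *ᵥ u)⁻¹ * (u ⬝ᵥ (mpow M⁻¹ (p+1)) *ᵥ u)) := by
    rw [hNM, Matrix.mul_neg, Matrix.trace_neg, Matrix.mul_smul, Matrix.trace_smul,
      trace_mul_vecMulVec, hquad, smul_eq_mul]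
  rw [htr2, mul_neg, ← sub_eq_add_neg] at hk
  have hjen : (u ⬝ᵥ M⁻¹ *ᵥ u) ^ (p+1) ≤ u ⬝ᵥ (mpow M⁻¹ (p+1)) *ᵥ u :=
    jensen hMi hu (by linarith : (1:ℝ) ≤ p+1)
  have hc0 : 0 < (1 + u ⬝ᵥ M⁻¹ *ᵥ u)⁻¹ := inv_pos.2 h1x
  calc p * (u ⬝ᵥ M⁻¹ *ᵥ u) ^ (p+1) / (1 + u ⬝ᵥ M⁻¹ *ᵥ u)
      = p * ((1 + u ⬝ᵥ M⁻¹ *ᵥ u)⁻¹ * (u ⬝ᵥ M⁻¹ *ᵥ u) ^ (p+1)) := by ring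
  _ ≤ p * ((1 + u ⬝ᵥ M⁻¹ *ᵥ u)⁻¹ * (u ⬝ᵥ (mpow M⁻¹ (p+1)) *ᵥ u)) := by
      apply mul_le_mul_of_nonneg_left _ hp0.le
      exact mul_le_mul_of_nonneg_left hjen hc0.le
  _ ≤ (mpow M (-p)).trace - (mpow (M + vecMulVec u u) (-p)).trace := by linarith [hk]

lemma le_two_log {x : ℝ} (hx0 : 0 ≤ x) (hx2 : x ≤ 2) : x ≤ 2 * Real.log (1 + x) := by
  have hlog3 : (1:ℝ) ≤ Real.log 3 := by
    rw [Real.le_log_iff_exp_le (by norm_num : (0:ℝ) < 3)]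
    calc Real.exp 1 ≤ 2.7182818286 := Real.exp_one_lt_d9.le
    _ ≤ 3 := by norm_num
  have hconc := strictConcaveOn_log_Ioi.concaveOn
  have h := hconc.2 (Set.mem_Ioi.2 (by norm_num : (0:ℝ) < 1))
    (Set.mem_Ioi.2 (by norm_num : (0:ℝ) < 3))
    (by linarith : (0:ℝ) ≤ 1 - x/2) (by linarith : (0:ℝ) ≤ x/2) (by ring)
  simp only [smul_eq_mul, Real.log_one, mul_zero] at h
  rw [show (1 - x/2) * 1 + x/2 * 3 = 1 + x by ring] at h
  nlinarith [h, hlog3, mul_nonneg (by linarith : (0:ℝ) ≤ x/2)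
    (by linarith : (0:ℝ) ≤ Real.log 3 - 1)]

lemma holder_sum (s : Finset ℕ) (a : ℕ → ℝ) (ha : ∀ t ∈ s, 0 ≤ a t)
    {p : ℝ} (hp0 : 0 < p) (hp1 : p ≤ 1) :
    ∑ t ∈ s, a t ^ p ≤ (s.card : ℝ) ^ (1-p) * (∑ t ∈ s, a t) ^ p := by
  rcases Finset.eq_empty_or_nonempty s with rfl | hne
  · simp only [Finset.sum_empty, Finset.card_empty, Nat.cast_zero]
    exact mul_nonneg (Real.rpow_nonneg le_rfl _) (Real.rpow_nonneg le_rfl _)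
  · have hcard : (0:ℝ) < (s.card : ℝ) := by
      exact_mod_cast Finset.card_pos.2 hne
    set m : ℝ := (s.card : ℝ) with hm
    have hX0 : 0 ≤ ∑ t ∈ s, a t ^ p :=
      Finset.sum_nonneg fun t ht => Real.rpow_nonneg (ha t ht) p
    have hY0 : 0 ≤ ∑ t ∈ s, a t := Finset.sum_nonneg ha
    have hq : 1 ≤ 1/p := by rw [le_div_iff₀ hp0]; linarith
    have h := Real.rpow_arith_mean_le_arith_mean_rpow s (fun _ => 1/m) (fun t => a t ^ p)
      (fun i _ => by positivity)
      (by rw [Finset.sum_const, nsmul_eq_mul]; field_simp; rfl)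
      (fun i hi => Real.rpow_nonneg (ha i hi) p) hq
    have e1 : ∑ t ∈ s, (1/m) * (a t ^ p) = (∑ t ∈ s, a t ^ p) / m := by
      rw [Finset.sum_div]; exact Finset.sum_congr rfl fun t _ => by ring
    have e2 : ∑ t ∈ s, (1/m) * ((a t ^ p) ^ (1/p)) = (∑ t ∈ s, a t) / m := by
      rw [Finset.sum_div]
      refine Finset.sum_congr rfl fun t ht => ?_
      rw [← Real.rpow_mul (ha t ht), mul_one_div, div_self hp0.ne', Real.rpow_one]
      ring
    rw [e1, e2] at h
    -- h : ((∑ a^p)/m)^(1/p) ≤ (∑ a)/m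
    have h2 : (∑ t ∈ s, a t ^ p) / m ≤ ((∑ t ∈ s, a t) / m) ^ p := by
      have h3 := Real.rpow_le_rpow (Real.rpow_nonneg (by positivity) (1/p)) h hp0.le
      rwa [← Real.rpow_mul (by positivity), one_div_mul_cancel hp0.ne', Real.rpow_one] at h3
    have e5 : ((∑ t ∈ s, a t) / m) ^ p * m = m ^ (1-p) * (∑ t ∈ s, a t) ^ p := by
      rw [Real.div_rpow hY0 hcard.le, Real.rpow_sub hcard 1 p, Real.rpow_one]
      have hmp : (0:ℝ) < m ^ p := Real.rpow_pos_of_pos hcard p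
      field_simp
    rw [div_le_iff₀ hcard] at h2
    calc ∑ t ∈ s, a t ^ p ≤ ((∑ t ∈ s, a t) / m) ^ p * m := h2
    _ = m ^ (1-p) * (∑ t ∈ s, a t) ^ p := e5

end EPL

/-- Generalized elliptical potential lemma. -/
theorem generalized_elliptical_potential {d T : ℕ}
    (V : ℕ → Matrix (Fin d) (Fin d) ℝ) (u : ℕ → Fin d → ℝ)
    (hV0 : (V 0).PosDef)
    (hu : ∀ t < T, Real.sqrt (u t ⬝ᵥ u t) ≤ 1)
    (hrec : ∀ t, V (t + 1) = V t + vecMulVec (u t) (u t))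
    (p : ℝ) (hp0 : 0 < p) (hp1 : p ≤ 1) :
    ∑ t ∈ Finset.range T, mnorm (V t)⁻¹ (u t) ^ (2 * p) ≤
      2 ^ p * (T : ℝ) ^ (1 - p) * Real.log ((V T).det / (V 0).det) ^ p +
        3 / (2 * p) * ((mpow (V 0) (-p)).trace - (mpow (V T) (-p)).trace) := by
  classical
  have hVpd : ∀ t, (V t).PosDef := by
    intro t
    induction t with
    | zero => exact hV0
    | succ n ih =>
        rw [hrec n]
        exact ih.add_posSemidef (EPL.posSemidef_vecMulVec (u n))
  set x : ℕ → ℝ := fun t => u t ⬝ᵥ (V t)⁻¹ *ᵥ u t with hxdef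
  have hx0 : ∀ t, 0 ≤ x t := fun t => EPL.quad_nonneg (hVpd t).inv.posSemidef (u t)
  have hu1 : ∀ t, t < T → u t ⬝ᵥ u t ≤ 1 := by
    intro t ht
    have h1 := hu t ht
    have h2 : 0 ≤ u t ⬝ᵥ u t := Finset.sum_nonneg fun i _ => mul_self_nonneg _
    nlinarith [Real.sq_sqrt h2, Real.sqrt_nonneg (u t ⬝ᵥ u t)]
  have hterm : ∀ t, mnorm (V t)⁻¹ (u t) ^ (2*p) = x t ^ p := by
    intro t
    simp only [mnorm]
    rw [Real.sqrt_eq_rpow, ← Real.rpow_mul (hx0 t), show (1/(2:ℝ)) * (2*p) = p by ring]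
  set τ : ℕ → ℝ := fun t => (mpow (V t) (-p)).trace with hτ
  have hdrop : ∀ t, t < T → p * x t ^ (p+1) / (1 + x t) ≤ τ t - τ (t+1) := by
    intro t ht
    have h := EPL.trace_drop (hVpd t) (hu1 t ht) hp0 hp1
    simp only [hτ, hxdef]
    rw [hrec t]
    exact h
  have hdrop0 : ∀ t, t < T → 0 ≤ τ t - τ (t+1) := by
    intro t ht
    refine le_trans ?_ (hdrop t ht)
    apply div_nonneg
    · exact mul_nonneg hp0.le (Real.rpow_nonneg (hx0 t) _)
    · linarith [hx0 t]
  have hdetpos : ∀ t, 0 < (V t).det := fun t => (hVpd t).det_pos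
  have hdet : ∀ t, (V (t+1)).det = (V t).det * (1 + x t) := by
    intro t
    rw [hrec t]
    exact EPL.det_step (hVpd t) (u t)
  have hlogstep : ∀ t, Real.log ((V (t+1)).det) - Real.log ((V t).det)
      = Real.log (1 + x t) := by
    intro t
    rw [hdet t, Real.log_mul (hdetpos t).ne'
      (by linarith [hx0 t] : (1:ℝ) + x t ≠ 0)]
    ring
  have hlogsum : Real.log ((V T).det / (V 0).det)
      = ∑ t ∈ Finset.range T, Real.log (1 + x t) := by
    have hts := Finset.sum_range_sub (fun t => Real.log (V t).det) T
    rw [Real.log_div (hdetpos T).ne' (hdetpos 0).ne', ← hts]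
    exact Finset.sum_congr rfl fun t _ => hlogstep t
  have hlog0 : ∀ t, 0 ≤ Real.log (1 + x t) :=
    fun t => Real.log_nonneg (by linarith [hx0 t])
  have hLg0 : 0 ≤ Real.log ((V T).det / (V 0).det) := by
    rw [hlogsum]
    exact Finset.sum_nonneg fun t _ => hlog0 t
  have hsum_eq : ∑ t ∈ Finset.range T, mnorm (V t)⁻¹ (u t) ^ (2*p)
      = ∑ t ∈ Finset.range T, x t ^ p :=
    Finset.sum_congr rfl fun t _ => hterm t
  rw [hsum_eq]
  set S : Finset ℕ := (Finset.range T).filter (fun t => x t ≤ 2) with hS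
  set L : Finset ℕ := (Finset.range T).filter (fun t => 2 < x t) with hL
  have hsplit : ∑ t ∈ Finset.range T, x t ^ p = ∑ t ∈ S, x t ^ p + ∑ t ∈ L, x t ^ p := by
    rw [← Finset.sum_filter_add_sum_filter_not (Finset.range T) (fun t => x t ≤ 2)
      (fun t => x t ^ p)]
    congr 1
    refine Finset.sum_congr ?_ fun _ _ => rfl
    refine Finset.filter_congr fun t _ => ?_
    simp [not_le]
  have hSsum : ∑ t ∈ S, x t ≤ 2 * Real.log ((V T).det / (V 0).det) := by
    rw [hlogsum, Finset.mul_sum]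
    calc ∑ t ∈ S, x t ≤ ∑ t ∈ S, 2 * Real.log (1 + x t) := by
          apply Finset.sum_le_sum
          intro t ht
          exact EPL.le_two_log (hx0 t) (Finset.mem_filter.1 ht).2
    _ ≤ ∑ t ∈ Finset.range T, 2 * Real.log (1 + x t) := by
          apply Finset.sum_le_sum_of_subset_of_nonneg (Finset.filter_subset _ _)
          intro t _ _
          exact mul_nonneg (by norm_num) (hlog0 t)
  have hB1 : ∑ t ∈ S, x t ^ p
      ≤ 2 ^ p * (T:ℝ) ^ (1-p) * Real.log ((V T).det / (V 0).det) ^ p := by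
    have h1 := EPL.holder_sum S x (fun t _ => hx0 t) hp0 hp1
    have hcard : ((S.card : ℝ)) ≤ (T : ℝ) := by
      have h4 : S.card ≤ T := by
        rw [hS]
        exact le_trans (Finset.card_filter_le _ _) (le_of_eq (Finset.card_range T))
      exact_mod_cast h4
    have h2 : ((S.card:ℝ))^(1-p) ≤ (T:ℝ)^(1-p) :=
      Real.rpow_le_rpow (Nat.cast_nonneg _) hcard (by linarith)
    have hS0 : 0 ≤ ∑ t ∈ S, x t := Finset.sum_nonneg fun t _ => hx0 t
    have h3 : (∑ t ∈ S, x t) ^ p ≤ (2 * Real.log ((V T).det / (V 0).det)) ^ p :=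
      Real.rpow_le_rpow hS0 hSsum hp0.le
    calc ∑ t ∈ S, x t ^ p ≤ ((S.card:ℝ))^(1-p) * (∑ t ∈ S, x t) ^ p := h1
    _ ≤ (T:ℝ)^(1-p) * (2 * Real.log ((V T).det / (V 0).det)) ^ p :=
        mul_le_mul h2 h3 (Real.rpow_nonneg hS0 p) (Real.rpow_nonneg (Nat.cast_nonneg _) _)
    _ = 2 ^ p * (T:ℝ)^(1-p) * Real.log ((V T).det / (V 0).det) ^ p := by
        rw [Real.mul_rpow (by norm_num) hLg0]; ring
  have hB2 : ∑ t ∈ L, x t ^ p ≤ 3 / (2*p) * (τ 0 - τ T) := by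
    have hpt : ∀ t ∈ L, x t ^ p ≤ 3/(2*p) * (τ t - τ (t+1)) := by
      intro t ht
      obtain ⟨htT, hxt⟩ := Finset.mem_filter.1 ht
      rw [Finset.mem_range] at htT
      have hxp : 0 < x t ^ p := Real.rpow_pos_of_pos (by linarith) p
      have hdt := hdrop t htT
      have hstep : p * x t ^ p * (2/3) ≤ p * x t ^ (p+1) / (1 + x t) := by
        rw [Real.rpow_add_one (by linarith : x t ≠ 0) p,
          le_div_iff₀ (by linarith : (0:ℝ) < 1 + x t)]
        nlinarith [hxp, hp0, mul_pos hp0 hxp]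
      have h6 : p * x t ^ p * (2/3) ≤ τ t - τ (t+1) := le_trans hstep hdt
      rw [div_mul_eq_mul_div, le_div_iff₀ (by positivity : (0:ℝ) < 2*p)]
      nlinarith [h6]
    calc ∑ t ∈ L, x t ^ p ≤ ∑ t ∈ L, 3/(2*p) * (τ t - τ (t+1)) := Finset.sum_le_sum hpt
    _ = 3/(2*p) * ∑ t ∈ L, (τ t - τ (t+1)) := by rw [Finset.mul_sum]
    _ ≤ 3/(2*p) * ∑ t ∈ Finset.range T, (τ t - τ (t+1)) := by
        apply mul_le_mul_of_nonneg_left _ (by positivity)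
        apply Finset.sum_le_sum_of_subset_of_nonneg (Finset.filter_subset _ _)
        intro t ht _
        exact hdrop0 t (Finset.mem_range.1 ht)
    _ = 3/(2*p) * (τ 0 - τ T) := by rw [Finset.sum_range_sub']
  rw [hsplit]
  linarith [hB1, hB2]
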